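/- arXiv:1410.7187 — 3 statements merged into one kernel-verified Lean document; each statement's English description precedes it below -/
import Mathlib

section
/- Let B ⊂ ℝⁿ be compact and J : B → ℝ bounded and upper semi-continuous. Then there exists a sequence of polynomials (p_k) ⊂ ℝ[x] such that p_k(x) ≥ J(x) for all x ∈ B and ∫_B |p_k(x) − J(x)| dx → 0 as k → ∞. -/
open MeasureTheory Set Filter Topology

/-- Stone–Weierstrass for multivariate polynomials on a compact set. -/
lemma sw_aux {n : ℕ} {B : Set (Fin n → ℝ)} (hB : IsCompact B)
    (f : (Fin n → ℝ) → ℝ) (hf : Continuous f) {ε : ℝ} (hε : 0 < ε) :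
    ∃ q : MvPolynomial (Fin n) ℝ, ∀ x ∈ B, |MvPolynomial.eval x q - f x| < ε := by
  haveI : CompactSpace B := isCompact_iff_compactSpace.mp hB
  let φ : MvPolynomial (Fin n) ℝ →ₐ[ℝ] C(B, ℝ) :=
    MvPolynomial.aeval fun i =>
      (⟨fun x : B => (x : Fin n → ℝ) i, (continuous_apply i).comp continuous_subtype_val⟩ : C(B, ℝ))
  have hsep : (φ.range : Subalgebra ℝ C(B, ℝ)).SeparatesPoints := by
    intro x y hxy
    obtain ⟨i, hi⟩ : ∃ i, (x : Fin n → ℝ) i ≠ (y : Fin n → ℝ) i := by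
      by_contra h; push_neg at h; exact hxy (Subtype.ext (funext h))
    refine ⟨fun z : B => (z : Fin n → ℝ) i, ⟨φ (MvPolynomial.X i), ⟨⟨MvPolynomial.X i, rfl⟩, ?_⟩⟩, hi⟩
    simp [φ]
  obtain ⟨⟨g, hg⟩, hgf⟩ := ContinuousMap.exists_mem_subalgebra_near_continuous_of_separatesPoints
    φ.range hsep (fun x : B => f x) (hf.comp continuous_subtype_val) ε hε
  obtain ⟨q, rfl⟩ := hg
  refine ⟨q, fun x hx => ?_⟩
  have h := hgf ⟨x, hx⟩
  have heval : (φ q) ⟨x, hx⟩ = MvPolynomial.eval x q := by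
    show (ContinuousMap.evalAlgHom ℝ ℝ (⟨x, hx⟩ : B)) (MvPolynomial.aeval _ q)
      = MvPolynomial.eval x q
    rw [MvPolynomial.comp_aeval_apply]
    exact RingHom.congr_fun (MvPolynomial.coe_aeval_eq_eval x) q
  rw [Real.norm_eq_abs] at h
  simpa [heval] using h

theorem stmt_1 {n : ℕ} (B : Set (Fin n → ℝ)) (hB : IsCompact B) (hpos : 0 < volume B)
    (J : (Fin n → ℝ) → ℝ) (hbd : ∃ M, ∀ x ∈ B, |J x| ≤ M)
    (husc : UpperSemicontinuousOn J B) :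
    ∃ p : ℕ → MvPolynomial (Fin n) ℝ,
      (∀ k, ∀ x ∈ B, J x ≤ MvPolynomial.eval x (p k)) ∧
      Tendsto (fun k => ∫ x in B, |MvPolynomial.eval x (p k) - J x|) atTop (nhds 0) := by
  classical
  obtain ⟨M, hM⟩ := hbd
  have hne : B.Nonempty := by
    rcases Set.eq_empty_or_nonempty B with h | h
    · simp [h] at hpos
    · exact h
  haveI : Nonempty B := hne.to_subtype
  have hBm : MeasurableSet B := hB.isClosed.measurableSet
  have hvol : volume B < ⊤ := hB.measure_lt_top
  haveI : IsFiniteMeasure (volume.restrict B) :=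
    ⟨by rwa [Measure.restrict_apply_univ]⟩
  -- measurability of J on B
  have hgusc : UpperSemicontinuous (fun y : B => J y) := by
    intro x c hc
    have h2 := husc x x.2 c hc
    rw [← map_nhds_subtype_val x] at h2
    exact eventually_map.mp h2
  have hJext : Measurable (fun x => if h : x ∈ B then J x else (0 : ℝ)) :=
    Measurable.dite hgusc.measurable measurable_const hBm
  have hJae : AEStronglyMeasurable J (volume.restrict B) := by
    refine hJext.aestronglyMeasurable.congr ?_
    filter_upwards [ae_restrict_mem hBm] with x hx
    simp [hx]
  -- the continuous approximations from above
  set F : ℕ → (Fin n → ℝ) → ℝ :=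
    fun m x => ⨆ y : B, (J y - m * dist x (y : Fin n → ℝ)) with hF
  have hbdd : ∀ (m : ℕ) x, BddAbove (range fun y : B => J y - m * dist x (y : Fin n → ℝ)) := by
    intro m x
    refine ⟨M, ?_⟩
    rintro r ⟨y, rfl⟩
    show J y - m * dist x (y : Fin n → ℝ) ≤ M
    have h1 := (abs_le.1 (hM y y.2)).2
    have h2 : (0:ℝ) ≤ m * dist x (y : Fin n → ℝ) := by positivity
    linarith
  have hFleM : ∀ (m : ℕ) x, F m x ≤ M := by
    intro m x
    refine ciSup_le fun y => ?_
    show J y - m * dist x (y : Fin n → ℝ) ≤ M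
    have h1 := (abs_le.1 (hM y y.2)).2
    have h2 : (0:ℝ) ≤ m * dist x (y : Fin n → ℝ) := by positivity
    linarith
  have hJF : ∀ (m : ℕ), ∀ x ∈ B, J x ≤ F m x := by
    intro m x hx
    refine le_ciSup_of_le (hbdd m x) ⟨x, hx⟩ ?_
    simp
  have key : ∀ (m : ℕ) x x', F m x ≤ F m x' + m * dist x x' := by
    intro m x x'
    refine ciSup_le fun y => ?_
    have htri : dist x' (y : Fin n → ℝ) ≤ dist x' x + dist x (y : Fin n → ℝ) :=
      dist_triangle _ _ _
    have hmul : (m:ℝ) * dist x' (y : Fin n → ℝ) ≤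
        m * (dist x' x + dist x (y : Fin n → ℝ)) := by
      apply mul_le_mul_of_nonneg_left htri (by positivity)
    have hle : J y - m * dist x' (y : Fin n → ℝ) ≤ F m x' :=
      le_ciSup (hbdd m x') y
    have hcomm : dist x' x = dist x x' := dist_comm _ _
    nlinarith
  have hFcont : ∀ m : ℕ, Continuous (F m) := by
    intro m
    have : LipschitzWith m (F m) := by
      apply LipschitzWith.of_dist_le_mul
      intro x x'
      have h1 := key m x x'
      have h2 := key m x' x
      have hcomm : dist x' x = dist x x' := dist_comm _ _
      rw [hcomm] at h2
      rw [Real.dist_eq, abs_sub_le_iff]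
      simp only [NNReal.coe_natCast]
      constructor
      · linarith
      · linarith
    exact this.continuous
  have hFtend : ∀ x ∈ B, Tendsto (fun m => F m x) atTop (𝓝 (J x)) := by
    intro x hx
    rw [Metric.tendsto_atTop]
    intro ε hε
    have h2 : {y | J y < J x + ε/2} ∈ 𝓝[B] x :=
      husc x hx (J x + ε/2) (by linarith)
    rw [Metric.mem_nhdsWithin_iff] at h2
    obtain ⟨δ, hδpos, hδ⟩ := h2
    obtain ⟨N, hN⟩ := exists_nat_ge ((M - J x) / δ)
    refine ⟨N, fun m hm => ?_⟩
    have hFup : F m x ≤ J x + ε/2 := by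
      refine ciSup_le fun y => ?_
      rcases lt_or_ge (dist (y : Fin n → ℝ) x) δ with hlt | hge
      · have : J y < J x + ε/2 := hδ ⟨Metric.mem_ball.2 hlt, y.2⟩
        have hd : (0:ℝ) ≤ m * dist x (y : Fin n → ℝ) := by positivity
        linarith
      · have h1 := (abs_le.1 (hM y y.2)).2
        have hNm : ((N:ℝ)) ≤ m := by exact_mod_cast hm
        have hmd : (M - J x) ≤ m * δ := by
          have := (div_le_iff₀ hδpos).1 hN
          nlinarith
        have hδd : (m:ℝ) * δ ≤ m * dist x (y : Fin n → ℝ) := by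
          rw [dist_comm]
          apply mul_le_mul_of_nonneg_left hge (by positivity)
        linarith
    have hFlow := hJF m x hx
    rw [Real.dist_eq, abs_of_nonneg (by linarith)]
    linarith
  -- integrability
  have hFint : ∀ m : ℕ, IntegrableOn (F m) B :=
    fun m => (hFcont m).continuousOn.integrableOn_compact hB
  have hJint : IntegrableOn J B := by
    refine Integrable.mono' (integrable_const M) hJae ?_
    filter_upwards [ae_restrict_mem hBm] with x hx
    simpa using hM x hx
  -- choose the polynomials
  have hq : ∀ k : ℕ, ∃ q : MvPolynomial (Fin n) ℝ,
      ∀ x ∈ B, |MvPolynomial.eval x q - (F k x + 1/(k+1))| < 1/(k+1) := by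
    intro k
    exact sw_aux hB _ ((hFcont k).add continuous_const) (by positivity)
  choose p hp using hq
  have hlow : ∀ k, ∀ x ∈ B, F k x < MvPolynomial.eval x (p k) := by
    intro k x hx
    have := (abs_lt.1 (hp k x hx)).1
    linarith
  have hhigh : ∀ k, ∀ x ∈ B, MvPolynomial.eval x (p k) ≤ F k x + 2/(k+1) := by
    intro k x hx
    have := (abs_lt.1 (hp k x hx)).2
    have : MvPolynomial.eval x (p k) < F k x + 1/(k+1) + 1/(k+1) := by linarith
    have h2 : (1:ℝ)/(k+1) + 1/(k+1) = 2/(k+1) := by ring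
    linarith
  refine ⟨p, fun k x hx => le_of_lt (lt_of_le_of_lt (hJF k x hx) (hlow k x hx)), ?_⟩
  -- convergence
  have hpint : ∀ k, IntegrableOn (fun x => |MvPolynomial.eval x (p k) - J x|) B :=
    fun k => (((MvPolynomial.continuous_eval (p := p k)).continuousOn.integrableOn_compact
      hB).sub hJint).abs
  have hGtend : Tendsto (fun k => ∫ x in B, (F k x - J x)) atTop (𝓝 0) := by
    have h0 : (0:ℝ) = ∫ x in B, (0:ℝ) := by simp
    rw [h0]
    refine tendsto_integral_of_dominated_convergence (fun _ => 2*M)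
      (fun k => ((hFcont k).aestronglyMeasurable.restrict.sub hJae)) (integrable_const _)
      ?_ ?_
    · intro k
      filter_upwards [ae_restrict_mem hBm] with x hx
      have h1 := abs_le.1 (hM x hx)
      have h2 := hJF k x hx
      have h3 := hFleM k x
      rw [Real.norm_eq_abs, abs_of_nonneg (by linarith)]
      linarith [h1.1, h1.2]
    · filter_upwards [ae_restrict_mem hBm] with x hx
      have := (hFtend x hx).sub (tendsto_const_nhds (x := J x))
      simpa using this
  have hIle : ∀ k, ∫ x in B, |MvPolynomial.eval x (p k) - J x| ≤
      (∫ x in B, (F k x - J x)) + (volume B).toReal * (2/(k+1)) := by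
    intro k
    have hmono : ∫ x in B, |MvPolynomial.eval x (p k) - J x| ≤
        ∫ x in B, ((F k x - J x) + 2/(k+1)) := by
      refine setIntegral_mono_on (hpint k) (((hFint k).sub hJint).add (integrable_const _))
        hBm ?_
      intro x hx
      have h1 := hJF k x hx
      have h2 := hlow k x hx
      have h3 := hhigh k x hx
      rw [abs_of_nonneg (by linarith)]
      linarith
    have hint1 : Integrable (fun x => F k x - J x) (volume.restrict B) := (hFint k).sub hJint
    have hadd : (∫ x in B, ((F k x - J x) + 2/((k:ℝ)+1)))
        = (∫ x in B, (F k x - J x)) + (volume B).toReal * (2/((k:ℝ)+1)) := by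
      rw [integral_add hint1 (integrable_const _)]
      simp [integral_const, Measure.restrict_apply_univ, smul_eq_mul, Measure.real]
    rw [hadd] at hmono
    exact hmono
  have hutend : Tendsto (fun k : ℕ => (∫ x in B, (F k x - J x)) +
      (volume B).toReal * (2/(k+1))) atTop (𝓝 0) := by
    have h2 : Tendsto (fun k : ℕ => (volume B).toReal * (2/(k+1))) atTop (𝓝 0) := by
      have := tendsto_one_div_add_atTop_nhds_zero_nat (𝕜 := ℝ)
      have h3 := this.const_mul ((volume B).toReal * 2)
      simp only [mul_zero] at h3
      convert h3 using 2 with k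
      push_cast
      ring
    simpa using hGtend.add h2
  refine squeeze_zero (fun k => integral_nonneg fun x => abs_nonneg _) hIle hutend
end

section
/- Let K ⊂ ℝⁿ × ℝᵐ be compact, B ⊂ ℝⁿ compact with finite positive Lebesgue measure, f : K → ℝ continuous, K_x nonempty for all x ∈ B, and J(x) = max_{y∈K_x} f(x,y). Assume vol({x ∈ B : J(x) = 0}) = 0. Let (p_k) ⊂ ℝ[x] be polynomials with p_k(x) ≥ f(x,y) for all (x,y) ∈ K with x ∈ B, and ∫_B |p_k − J| dx → 0. Define D := {x ∈ B : ∃ y ∈ K_x, f(x,y) ≥ 0} and D_k := {x ∈ B : p_k(x) ≥ 0}. Then D ⊆ D_k for every k, and vol(D_k \ D) → 0 as k → ∞. -/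
open MeasureTheory Set Filter Topology

/-- `Jsup f K x` is the value `sup { f (x, y) : (x, y) ∈ K }`. -/
noncomputable def Jsup {n m : ℕ} (f : (Fin n → ℝ) × (Fin m → ℝ) → ℝ)
    (K : Set ((Fin n → ℝ) × (Fin m → ℝ))) (x : Fin n → ℝ) : ℝ :=
  sSup ((fun y => f (x, y)) '' {y | (x, y) ∈ K})

theorem stmt_7 {n m : ℕ} (K : Set ((Fin n → ℝ) × (Fin m → ℝ))) (hK : IsCompact K)
    (B : Set (Fin n → ℝ)) (hB : IsCompact B) (h0 : 0 < volume B) (hfin : volume B < ⊤)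
    (f : (Fin n → ℝ) × (Fin m → ℝ) → ℝ) (hf : Continuous f)
    (hne : ∀ x ∈ B, {y | (x, y) ∈ K}.Nonempty)
    (hzero : volume {x ∈ B | Jsup f K x = 0} = 0)
    (p : ℕ → MvPolynomial (Fin n) ℝ)
    (hdom : ∀ k, ∀ x ∈ B, ∀ y, (x, y) ∈ K → f (x, y) ≤ MvPolynomial.eval x (p k))
    (hL1 : Tendsto (fun k => ∫ x in B, |MvPolynomial.eval x (p k) - Jsup f K x|)
      atTop (nhds 0))
    (hpzero : ∀ k, volume {x ∈ B | MvPolynomial.eval x (p k) = 0} = 0) :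
    (∀ k, {x ∈ B | ∃ y, (x, y) ∈ K ∧ 0 ≤ f (x, y)} ⊆
        {x ∈ B | 0 ≤ MvPolynomial.eval x (p k)}) ∧
      Tendsto (fun k => volume ({x ∈ B | 0 ≤ MvPolynomial.eval x (p k)} \
        {x ∈ B | ∃ y, (x, y) ∈ K ∧ 0 ≤ f (x, y)})) atTop (nhds 0) := by
  have hBm : MeasurableSet B := hB.measurableSet
  set J := Jsup f K with hJdef
  -- compactness of the value sets
  have hsl : ∀ x : Fin n → ℝ, IsCompact ((fun y => f (x, y)) '' {y | (x, y) ∈ K}) := by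
    intro x
    have h1 : IsCompact (K ∩ Prod.fst ⁻¹' {x}) :=
      hK.inter_right (isClosed_singleton.preimage continuous_fst)
    have h2 : IsCompact (f '' (K ∩ Prod.fst ⁻¹' {x})) := h1.image hf
    have heq : (fun y => f (x, y)) '' {y | (x, y) ∈ K} = f '' (K ∩ Prod.fst ⁻¹' {x}) := by
      ext z
      simp only [mem_image, mem_setOf_eq, mem_inter_iff, mem_preimage, mem_singleton_iff]
      constructor
      · rintro ⟨y, hy, rfl⟩; exact ⟨(x, y), ⟨hy, rfl⟩, rfl⟩
      · rintro ⟨⟨a, b⟩, ⟨hpK, rfl⟩, rfl⟩; exact ⟨b, hpK, rfl⟩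
    rw [heq]; exact h2
  have hbdd : ∀ x, BddAbove ((fun y => f (x, y)) '' {y | (x, y) ∈ K}) := fun x =>
    (hsl x).bddAbove
  have hle : ∀ x y, (x, y) ∈ K → f (x, y) ≤ J x := fun x y hy =>
    le_csSup (hbdd x) ⟨y, hy, rfl⟩
  have hmem : ∀ x ∈ B, J x ∈ (fun y => f (x, y)) '' {y | (x, y) ∈ K} := fun x hx =>
    (hsl x).sSup_mem ((hne x hx).image _)
  -- global bound for f on K
  obtain ⟨C, hC⟩ := hK.exists_bound_of_continuousOn hf.continuousOn
  have hJbd : ∀ x ∈ B, |J x| ≤ C := by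
    intro x hx
    obtain ⟨y, hy, hval⟩ := hmem x hx
    rw [← hval]
    have := hC (x, y) hy
    rwa [Real.norm_eq_abs] at this
  -- projections of superlevel sets are closed
  have hPc : ∀ a : ℝ, IsClosed (Prod.fst '' (K ∩ f ⁻¹' Ici a)) := fun a =>
    ((hK.inter_right ((isClosed_Ici).preimage hf)).image continuous_fst).isClosed
  have key1 : ∀ a : ℝ, ∀ x ∈ B, x ∉ Prod.fst '' (K ∩ f ⁻¹' Ici a) → J x ≤ a := by
    intro a x hx hnp
    refine csSup_le ((hne x hx).image _) ?_
    rintro z ⟨y, hy, rfl⟩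
    by_contra h
    push_neg at h
    exact hnp ⟨(x, y), ⟨hy, le_of_lt h⟩, rfl⟩
  have key2 : ∀ a b : ℝ, b < a → ∀ x, J x ≤ b → x ∉ Prod.fst '' (K ∩ f ⁻¹' Ici a) := by
    rintro a b hba x hJx ⟨⟨u, v⟩, ⟨hqK, hqf⟩, rfl⟩
    have h1 : f (u, v) ≤ J u := hle u v hqK
    simp only [mem_preimage, mem_Ici] at hqf
    linarith
  -- the sublevel sets of J within B are measurable
  have hMeq : ∀ b : ℝ, {x ∈ B | J x ≤ b} =
      ⋂ (k : ℕ), (B \ Prod.fst '' (K ∩ f ⁻¹' Ici (b + 1 / ((k : ℝ) + 1)))) := by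
    intro b
    ext x
    simp only [mem_setOf_eq, mem_iInter, mem_diff]
    constructor
    · intro ⟨hxB, hJx⟩ k
      refine ⟨hxB, key2 _ b ?_ x hJx⟩
      have : (0 : ℝ) < 1 / ((k : ℝ) + 1) := by positivity
      linarith
    · intro hx
      refine ⟨(hx 0).1, ?_⟩
      refine le_of_forall_pos_le_add ?_
      intro ε hε
      obtain ⟨k, hk⟩ := exists_nat_one_div_lt hε
      have := key1 _ x (hx k).1 (hx k).2
      linarith
  have hM : ∀ b : ℝ, MeasurableSet {x ∈ B | J x ≤ b} := by
    intro b
    rw [hMeq b]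
    exact MeasurableSet.iInter fun k => hBm.diff (hPc _).measurableSet
  have hMmono : ∀ b b' : ℝ, b ≤ b' → {x ∈ B | J x ≤ b} ⊆ {x ∈ B | J x ≤ b'} := by
    intro b b' hbb' x ⟨hxB, hx⟩; exact ⟨hxB, hx.trans hbb'⟩
  -- indicator of J is measurable
  have hJind : Measurable (B.indicator J) := by
    apply measurable_of_Iic
    intro c
    have hpre : B.indicator J ⁻¹' Iic c = {x ∈ B | J x ≤ c} ∪ {x | x ∉ B ∧ (0 : ℝ) ≤ c} := by
      ext x
      by_cases hx : x ∈ B <;>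
        simp [Set.indicator, hx]
    rw [hpre]
    refine (hM c).union ?_
    by_cases h : (0 : ℝ) ≤ c
    · simp only [h, and_true]
      exact hBm.compl
    · simp [h]
  -- the polynomials and g_k are measurable
  have hpm : ∀ k, Measurable fun x => MvPolynomial.eval x (p k) := fun k =>
    (MvPolynomial.continuous_eval (p k)).measurable
  set g : ℕ → (Fin n → ℝ) → ℝ :=
    fun k x => |MvPolynomial.eval x (p k) - B.indicator J x| with hgdef
  have hgm : ∀ k, Measurable (g k) := fun k => ((hpm k).sub hJind).abs
  have hgeq : ∀ k, ∀ x ∈ B, g k x = |MvPolynomial.eval x (p k) - J x| := by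
    intro k x hx
    simp [hgdef, Set.indicator_of_mem hx]
  -- integrability and lintegral identity
  have hInt : ∀ k, IntegrableOn (g k) B volume := by
    intro k
    obtain ⟨Ck, hCk⟩ := hB.exists_bound_of_continuousOn
      (MvPolynomial.continuous_eval (p k)).continuousOn
    refine Measure.integrableOn_of_bounded hfin.ne (hgm k).aestronglyMeasurable
      (M := Ck + C) ?_
    filter_upwards [ae_restrict_of_forall_mem hBm
      (fun x (hx : x ∈ B) => hx)] with x hx
    have h1 : |MvPolynomial.eval x (p k)| ≤ Ck := by
      have := hCk x hx; rwa [Real.norm_eq_abs] at this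
    have h2 : |J x| ≤ C := hJbd x hx
    rw [Real.norm_eq_abs, hgeq k x hx, abs_abs]
    calc |MvPolynomial.eval x (p k) - J x| ≤
        |MvPolynomial.eval x (p k)| + |J x| := abs_sub _ _
      _ ≤ Ck + C := add_le_add h1 h2
  have hIeq : ∀ k, ENNReal.ofReal (∫ x in B, |MvPolynomial.eval x (p k) - J x|)
      = ∫⁻ x in B, ENNReal.ofReal (g k x) := by
    intro k
    have h1 : (∫ x in B, |MvPolynomial.eval x (p k) - J x|) = ∫ x in B, g k x := by
      refine setIntegral_congr_fun hBm ?_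
      intro x hx
      exact (hgeq k x hx).symm
    rw [h1]
    exact ofReal_integral_eq_lintegral_ofReal (hInt k)
      (Eventually.of_forall fun x => abs_nonneg _)
  -- the "good" sets
  set D : Set (Fin n → ℝ) := {x ∈ B | ∃ y, (x, y) ∈ K ∧ 0 ≤ f (x, y)} with hDdef
  set Dk : ℕ → Set (Fin n → ℝ) :=
    fun k => {x ∈ B | 0 ≤ MvPolynomial.eval x (p k)} with hDkdef
  have hDkm : ∀ k, MeasurableSet (Dk k) := by
    intro k
    have : Dk k = B ∩ (fun x => MvPolynomial.eval x (p k)) ⁻¹' Ici 0 := by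
      ext x; simp [hDkdef]
    rw [this]
    exact hBm.inter ((hpm k) measurableSet_Ici)
  -- part 1
  have part1 : ∀ k, D ⊆ Dk k := by
    intro k x hx
    obtain ⟨hxB, y, hyK, hyf⟩ := hx
    exact ⟨hxB, hyf.trans (hdom k x hxB y hyK)⟩
  refine ⟨part1, ?_⟩
  -- the exceptional sets
  set G : ℕ → Set (Fin n → ℝ) :=
    fun j => {x ∈ B | J x ≤ 0} \ {x ∈ B | J x ≤ -(1 / ((j : ℝ) + 1))} with hGdef
  have hGm : ∀ j, MeasurableSet (G j) := fun j => (hM 0).diff (hM _)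
  have hGanti : Antitone G := by
    intro j j' hjj'
    refine diff_subset_diff_right (hMmono _ _ ?_)
    have h1 : (1 : ℝ) / ((j' : ℝ) + 1) ≤ 1 / ((j : ℝ) + 1) := by
      apply one_div_le_one_div_of_le
      · positivity
      · have : (j : ℝ) ≤ (j' : ℝ) := Nat.cast_le.mpr hjj'
        linarith
    linarith
  have hGiInter : ⋂ j, G j = {x ∈ B | J x = 0} := by
    ext x
    simp only [mem_iInter, hGdef, mem_diff, mem_setOf_eq]
    constructor
    · intro hx
      obtain ⟨⟨hxB, hJ0⟩, -⟩ := hx 0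
      refine ⟨hxB, le_antisymm hJ0 ?_⟩
      by_contra hneg
      push_neg at hneg
      obtain ⟨j, hj⟩ := exists_nat_one_div_lt (neg_pos.mpr hneg)
      exact (hx j).2 ⟨hxB, by linarith⟩
    · rintro ⟨hxB, hJ⟩ j
      have hpos : (0 : ℝ) < 1 / ((j : ℝ) + 1) := by positivity
      exact ⟨⟨hxB, hJ.le⟩, fun h => by rw [hJ] at h; linarith [h.2]⟩
  have htendG : Tendsto (fun j => volume (G j)) atTop (𝓝 0) := by
    have hG0 : volume (G 0) ≠ ⊤ := by
      refine (lt_of_le_of_lt (measure_mono ?_) hfin).ne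
      intro x hx; exact hx.1.1
    have := MeasureTheory.tendsto_measure_iInter_atTop
      (fun j => (hGm j).nullMeasurableSet) hGanti ⟨0, hG0⟩
    rw [hGiInter, hzero] at this
    exact this
  -- cover of the difference set
  have hcov : ∀ (k j : ℕ), Dk k \ D ⊆ (Dk k ∩ {x ∈ B | J x ≤ -(1 / ((j : ℝ) + 1))}) ∪ G j := by
    intro k j x hx
    obtain ⟨⟨hxB, hpk⟩, hxD⟩ := hx
    have hJlt : J x < 0 := by
      obtain ⟨y, hyK, hyv⟩ := hmem x hxB
      rw [← hyv]
      by_contra h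
      push_neg at h
      exact hxD ⟨hxB, y, hyK, h⟩
    by_cases hc : J x ≤ -(1 / ((j : ℝ) + 1))
    · exact Or.inl ⟨⟨hxB, hpk⟩, hxB, hc⟩
    · exact Or.inr ⟨⟨hxB, hJlt.le⟩, fun h => hc h.2⟩
  -- Markov inequality
  have hMarkov : ∀ (k j : ℕ), ENNReal.ofReal (1 / ((j : ℝ) + 1)) *
      volume (Dk k ∩ {x ∈ B | J x ≤ -(1 / ((j : ℝ) + 1))}) ≤
      ENNReal.ofReal (∫ x in B, |MvPolynomial.eval x (p k) - J x|) := by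
    intro k j
    set A := Dk k ∩ {x ∈ B | J x ≤ -(1 / ((j : ℝ) + 1))} with hAdef
    have hAm : MeasurableSet A := (hDkm k).inter (hM _)
    have hAB : A ⊆ B := fun x hx => hx.1.1
    have hbound : ∀ x ∈ A, ENNReal.ofReal (1 / ((j : ℝ) + 1)) ≤ ENNReal.ofReal (g k x) := by
      rintro x ⟨⟨hxB, hpk⟩, -, hJx⟩
      apply ENNReal.ofReal_le_ofReal
      rw [hgeq k x hxB]
      have h1 : 1 / ((j : ℝ) + 1) ≤ MvPolynomial.eval x (p k) - J x := by linarith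
      exact h1.trans (le_abs_self _)
    calc ENNReal.ofReal (1 / ((j : ℝ) + 1)) * volume A
        = ∫⁻ _ in A, ENNReal.ofReal (1 / ((j : ℝ) + 1)) := (setLIntegral_const _ _).symm
      _ ≤ ∫⁻ x in A, ENNReal.ofReal (g k x) :=
          lintegral_mono_ae (ae_restrict_of_forall_mem hAm hbound)
      _ ≤ ∫⁻ x in B, ENNReal.ofReal (g k x) := lintegral_mono_set hAB
      _ = ENNReal.ofReal (∫ x in B, |MvPolynomial.eval x (p k) - J x|) := (hIeq k).symm
  -- conclusion
  rw [show (nhds (0 : ENNReal)) = 𝓝 0 from rfl, ENNReal.tendsto_atTop_zero]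
  intro δ hδ
  by_cases hδtop : δ = ⊤
  · exact ⟨0, fun k _ => by simp [hδtop]⟩
  have hδ2 : 0 < δ / 2 := ENNReal.half_pos hδ.ne'
  obtain ⟨j, hj⟩ := (ENNReal.tendsto_atTop_zero.mp htendG) (δ / 2) hδ2
  set ε := ENNReal.ofReal (1 / ((j : ℝ) + 1)) with hεdef
  have hεpos : ε ≠ 0 := by
    simp only [hεdef, ne_eq, ENNReal.ofReal_eq_zero, not_le]
    positivity
  have hεtop : ε ≠ ⊤ := ENNReal.ofReal_ne_top
  have hofI : Tendsto (fun k => ENNReal.ofReal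
      (∫ x in B, |MvPolynomial.eval x (p k) - J x|)) atTop (𝓝 0) := by
    have := ENNReal.tendsto_ofReal hL1
    simpa using this
  have hc : (0 : ENNReal) < ε * (δ / 2) := ENNReal.mul_pos hεpos hδ2.ne'
  obtain ⟨N, hN⟩ := (ENNReal.tendsto_atTop_zero.mp hofI) (ε * (δ / 2)) hc
  refine ⟨N, fun k hk => ?_⟩
  have hAk : volume (Dk k ∩ {x ∈ B | J x ≤ -(1 / ((j : ℝ) + 1))}) ≤ δ / 2 :=
    (ENNReal.mul_le_mul_iff_right hεpos hεtop).mp ((hMarkov k j).trans (hN k hk))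
  calc volume (Dk k \ D)
      ≤ volume ((Dk k ∩ {x ∈ B | J x ≤ -(1 / ((j : ℝ) + 1))}) ∪ G j) :=
        measure_mono (hcov k j)
    _ ≤ volume (Dk k ∩ {x ∈ B | J x ≤ -(1 / ((j : ℝ) + 1))}) + volume (G j) :=
        measure_union_le _ _
    _ ≤ δ / 2 + δ / 2 := add_le_add hAk (hj j le_rfl)
    _ = δ := ENNReal.add_halves δ
end

section
/- Let z = (z_{αβ}) be a sequence indexed by multi-indices of degree ≤ 2k in n+m variables satisfying: L_z(1) = 1, the localizing matrices associated with g(y) = 1 − ‖y‖² and θ_i(x) = 1 − x_i² (i = 1,…,n) of order k−1 are positive semidefinite, and the moment matrix M_k(z) ⪰ 0. Then L_z(y_ℓ^{2k}) ≤ 1 for ℓ = 1,…,m and L_z(x_i^{2k}) ≤ 1 for i = 1,…,n. -/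
open MvPolynomial

theorem stmt_18 {n m : ℕ} (k : ℕ)
    (L : MvPolynomial (Fin n ⊕ Fin m) ℝ →ₗ[ℝ] ℝ)
    (hone : L 1 = 1)
    (hmom : ∀ u : MvPolynomial (Fin n ⊕ Fin m) ℝ, u.totalDegree ≤ k → 0 ≤ L (u ^ 2))
    (hg : ∀ u : MvPolynomial (Fin n ⊕ Fin m) ℝ, u.totalDegree ≤ k - 1 →
      0 ≤ L (u ^ 2 * (1 - ∑ ℓ : Fin m, (X (Sum.inr ℓ)) ^ 2)))
    (hθ : ∀ i : Fin n, ∀ u : MvPolynomial (Fin n ⊕ Fin m) ℝ, u.totalDegree ≤ k - 1 →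
      0 ≤ L (u ^ 2 * (1 - (X (Sum.inl i)) ^ 2))) :
    (∀ ℓ : Fin m, L ((X (Sum.inr ℓ) : MvPolynomial (Fin n ⊕ Fin m) ℝ) ^ (2 * k)) ≤ 1) ∧
      (∀ i : Fin n, L ((X (Sum.inl i) : MvPolynomial (Fin n ⊕ Fin m) ℝ) ^ (2 * k)) ≤ 1) := by
  constructor
  · intro ℓ
    suffices h : ∀ j, j ≤ k → L ((X (Sum.inr ℓ) : MvPolynomial (Fin n ⊕ Fin m) ℝ) ^ (2 * j)) ≤ 1 from
      h k le_rfl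
    intro j
    induction j with
    | zero => intro _; simpa using hone.le
    | succ j ih =>
      intro hj
      have ih' := ih (by omega)
      set x : MvPolynomial (Fin n ⊕ Fin m) ℝ := X (Sum.inr ℓ) with hx
      have hdeg : (x ^ j).totalDegree ≤ k - 1 := by
        rw [totalDegree_X_pow]; omega
      have h1 := hg _ hdeg
      have key : (x ^ j) ^ 2 * (1 - ∑ ℓ' : Fin m, (X (Sum.inr ℓ')) ^ 2)
          = x ^ (2 * j) - ∑ ℓ' : Fin m, (x ^ j * X (Sum.inr ℓ')) ^ 2 := by
        rw [mul_sub, mul_one, Finset.mul_sum]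
        congr 1
        · ring
        · exact Finset.sum_congr rfl fun ℓ' _ => (mul_pow _ _ _).symm
      rw [key, map_sub, map_sum, sub_nonneg] at h1
      have hterm : ∀ ℓ' : Fin m, ℓ' ∈ Finset.univ →
          0 ≤ L ((x ^ j * X (Sum.inr ℓ')) ^ 2) := by
        intro ℓ' _
        apply hmom
        calc (x ^ j * X (Sum.inr ℓ')).totalDegree
            ≤ (x ^ j).totalDegree + (X (Sum.inr ℓ') : MvPolynomial (Fin n ⊕ Fin m) ℝ).totalDegree :=
              totalDegree_mul _ _
          _ ≤ (k - 1) + 1 := add_le_add hdeg (totalDegree_X _).le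
          _ ≤ k := by omega
      have hsingle : L ((x ^ j * X (Sum.inr ℓ)) ^ 2)
          ≤ ∑ ℓ' : Fin m, L ((x ^ j * X (Sum.inr ℓ')) ^ 2) :=
        Finset.single_le_sum hterm (Finset.mem_univ ℓ)
      have heq : (x ^ j * X (Sum.inr ℓ)) ^ 2 = x ^ (2 * (j + 1)) := by
        rw [← hx]; ring
      rw [heq] at hsingle
      linarith
  · intro i
    suffices h : ∀ j, j ≤ k → L ((X (Sum.inl i) : MvPolynomial (Fin n ⊕ Fin m) ℝ) ^ (2 * j)) ≤ 1 from
      h k le_rfl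
    intro j
    induction j with
    | zero => intro _; simpa using hone.le
    | succ j ih =>
      intro hj
      have ih' := ih (by omega)
      set x : MvPolynomial (Fin n ⊕ Fin m) ℝ := X (Sum.inl i) with hx
      have hdeg : (x ^ j).totalDegree ≤ k - 1 := by
        rw [totalDegree_X_pow]; omega
      have h1 := hθ i _ hdeg
      have key : (x ^ j) ^ 2 * (1 - x ^ 2) = x ^ (2 * j) - x ^ (2 * (j + 1)) := by ring
      rw [key, map_sub, sub_nonneg] at h1
      linarith
end
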